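/- Let n ≥ 1 and let P_n denote the path graph on n vertices. Then the set of complex roots of the independence polynomial I(P_n, z) is exactly { 1/(4·cos²(kπ/(n+2))) : k = 1, 2, …, ⌈n/2⌉ }. In particular the smallest root is β(P_n) = 1/(4·cos²(π/(n+2))) and the root of second smallest absolute value is 1/(4·cos²(2π/(n+2))) (for n ≥ 3). -/

import Mathlib

open Polynomial

open scoped Classical in
/-- `indPolyOn G A` is the independence polynomial (over `ℝ`) of the subgraph of `G`
induced on the vertex set `A`: the sum of `(-1)^|s| • X^|s|` over all independent
sets `s ⊆ A` of `G`.  Equivalently it is `∑ k (-1)^k a_k z^k` where `a_k` is the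
number of independent sets of size `k` of the induced subgraph `G[A]`. -/
noncomputable def indPolyOn {V : Type*} [Fintype V] (G : SimpleGraph V) (A : Set V) :
    Polynomial ℝ :=
  ∑ s ∈ Finset.univ.filter
      (fun s : Finset V => ↑s ⊆ A ∧ ∀ u ∈ s, ∀ v ∈ s, ¬ G.Adj u v),
    ((-1 : ℝ) ^ s.card) • (X : Polynomial ℝ) ^ s.card

/-- The independence polynomial `I(G,z)` of `G`. -/
noncomputable def indPoly {V : Type*} [Fintype V] (G : SimpleGraph V) : Polynomial ℝ :=
  indPolyOn G Set.univ

noncomputable def Q : ℕ → Polynomial ℝ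
  | 0 => 1
  | 1 => 1 - X
  | (n+2) => Q (n+1) - X * Q n

theorem Q_eval (θ : ℝ) (hc : Real.cos θ ≠ 0) (n : ℕ) :
    Real.sin θ * (2 * Real.cos θ) ^ (n+1) * (Q n).eval (1 / (4 * Real.cos θ ^ 2))
      = Real.sin ((n+2) * θ) := by
  set s := Real.sin θ with hs_def
  set c := Real.cos θ with hc_def
  have key : ∀ m : ℕ, Real.sin ((m+3) * θ) = 2 * c * Real.sin ((m+2)*θ) - Real.sin ((m+1)*θ) := by
    intro m
    have h1 : ((m:ℝ)+3) * θ = (m+2)*θ + θ := by ring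
    have h2 : ((m:ℝ)+1) * θ = (m+2)*θ - θ := by ring
    rw [h1, h2, Real.sin_add, Real.sin_sub]
    ring
  induction n using Nat.strong_induction_on with
  | _ n ih =>
    match n with
    | 0 =>
      show s * (2*c)^(0+1) * (Q 0).eval _ = _
      simp only [Q, eval_one]
      push_cast
      rw [show ((0:ℝ)+2)*θ = 2*θ by ring, Real.sin_two_mul]
      ring
    | 1 =>
      show s * (2*c)^(1+1) * (Q 1).eval _ = _
      simp only [Q, eval_sub, eval_one, eval_X]
      push_cast
      rw [show ((1:ℝ)+2)*θ = 3*θ by ring, Real.sin_three_mul]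
      have hs : s^2 = 1 - c^2 := by
        have := Real.sin_sq_add_cos_sq θ; nlinarith
      have hc2 : (4:ℝ)*c^2 ≠ 0 := by positivity
      field_simp
      linear_combination (16*s) * hs
    | (m+2) =>
      have e1 := ih (m+1) (by omega)
      have e0 := ih m (by omega)
      show s * (2*c)^(m+3) * (Q (m+1) - X * Q m).eval _ = _
      rw [eval_sub, eval_mul, eval_X]
      have hk := key (m+1)
      push_cast at e1 e0 hk ⊢
      have hc2 : (4:ℝ)*c^2 ≠ 0 := by positivity
      have expand : s * (2*c)^(m+3) * ((Q (m+1)).eval (1/(4*c^2)) - 1/(4*c^2) * (Q m).eval (1/(4*c^2)))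
          = 2*c*(s * (2*c)^(m+2) * (Q (m+1)).eval (1/(4*c^2))) - (s * (2*c)^(m+1) * (Q m).eval (1/(4*c^2))) := by
        field_simp
        ring
      rw [expand]
      rw [show m+1+1 = m+2 by ring] at e1
      rw [e1, e0]
      rw [show ((m:ℝ)+1+2)*θ = ((m:ℝ)+3)*θ by ring] at hk
      rw [show ((m:ℝ)+1+1)*θ = ((m:ℝ)+2)*θ by ring] at hk
      rw [show ((m:ℝ)+2+2)*θ = ((m:ℝ)+1+3)*θ by ring, show ((m:ℝ)+1+3)*θ = ((m:ℝ)+4)*θ by ring]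
      rw [show ((m:ℝ)+1+2)*θ = ((m:ℝ)+3)*θ by ring]
      rw [show ((m:ℝ)+1+3)*θ = ((m:ℝ)+4)*θ by ring] at hk
      linarith [hk]

theorem Q_deg : ∀ j : ℕ, (Q (2*j)).natDegree = j ∧ (Q (2*j)).coeff j = (-1)^j*(j+1)
    ∧ (Q (2*j+1)).natDegree = j+1 ∧ (Q (2*j+1)).coeff (j+1) = (-1)^(j+1) := by
  intro j
  induction j with
  | zero =>
    refine ⟨by simp [Q], by simp [Q], ?_, ?_⟩
    · show (1 - X : Polynomial ℝ).natDegree = 1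
      compute_degree!
    · show (1 - X : Polynomial ℝ).coeff 1 = _
      simp [coeff_one]
  | succ j ih =>
    obtain ⟨d0, c0, d1, c1⟩ := ih
    have h2 : 2*(j+1) = (2*j+1)+1 := by ring
    have h3 : 2*(j+1)+1 = (2*j+1)+2 := by ring
    have key2 : Q (2*(j+1)) = Q (2*j+1) - X * Q (2*j) := by rw [h2]; rfl
    have key3 : Q (2*(j+1)+1) = Q (2*(j+1)) - X * Q (2*j+1) := by rw [h3, h2]; rfl
    have cQ2 : (Q (2*(j+1))).coeff (j+1) = (-1)^(j+1) * (j+2) := by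
      rw [key2, coeff_sub, coeff_X_mul, c1, c0]
      push_cast
      ring
    have hdXQ : (X * Q (2*j)).natDegree ≤ j + 1 := by
      calc (X * Q (2*j)).natDegree ≤ (X : Polynomial ℝ).natDegree + (Q (2*j)).natDegree :=
            natDegree_mul_le
        _ ≤ j + 1 := by rw [natDegree_X, d0]; omega
    have dQ2le : (Q (2*(j+1))).natDegree ≤ j + 1 := by
      rw [key2]
      refine le_trans (natDegree_sub_le _ _) ?_
      rw [d1]
      omega
    have cQ2ne : (Q (2*(j+1))).coeff (j+1) ≠ 0 := by
      rw [cQ2]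
      exact mul_ne_zero (pow_ne_zero _ (by norm_num)) (by positivity)
    have dQ2 : (Q (2*(j+1))).natDegree = j + 1 :=
      le_antisymm dQ2le (le_natDegree_of_ne_zero cQ2ne)
    have hQ1ne : Q (2*j+1) ≠ 0 := fun h =>
      pow_ne_zero (j+1) (by norm_num : (-1:ℝ) ≠ 0) (by simpa [h] using c1.symm)
    have hdXQ1 : (X * Q (2*j+1)).natDegree = j + 2 := by
      rw [natDegree_X_mul hQ1ne, d1]
    have cQ3 : (Q (2*(j+1)+1)).coeff (j+2) = (-1)^(j+2) := by
      rw [key3, coeff_sub, coeff_X_mul, c1]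
      have : (Q (2*(j+1))).coeff (j+2) = 0 :=
        coeff_eq_zero_of_natDegree_lt (by omega)
      rw [this]
      ring
    have dQ3le : (Q (2*(j+1)+1)).natDegree ≤ j + 2 := by
      rw [key3]
      refine le_trans (natDegree_sub_le _ _) ?_
      rw [dQ2, hdXQ1]
      omega
    have dQ3 : (Q (2*(j+1)+1)).natDegree = j + 2 := by
      refine le_antisymm dQ3le (le_natDegree_of_ne_zero ?_)
      rw [cQ3]
      exact pow_ne_zero _ (by norm_num)
    refine ⟨dQ2, ?_, dQ3, cQ3⟩
    rw [cQ2]; push_cast; ring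

noncomputable def rr (n k : ℕ) : ℝ := 1 / (4 * Real.cos (k * Real.pi / (n + 2)) ^ 2)

theorem theta_mem {n k : ℕ} (hk1 : 1 ≤ k) (hk2 : 2 * k ≤ n + 1) :
    0 < (k : ℝ) * Real.pi / (n + 2) ∧ (k : ℝ) * Real.pi / (n + 2) < Real.pi / 2 := by
  have hpi := Real.pi_pos
  have h1 : (1 : ℝ) ≤ k := by exact_mod_cast hk1
  have h2 : (2 : ℝ) * k ≤ n + 1 := by exact_mod_cast hk2
  have hn2 : (0:ℝ) < (n:ℝ) + 2 := by positivity
  constructor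
  · positivity
  · rw [div_lt_div_iff₀ hn2 (by norm_num : (0:ℝ) < 2)]
    nlinarith

theorem rr_root {n k : ℕ} (hk1 : 1 ≤ k) (hk2 : 2 * k ≤ n + 1) :
    (Q n).eval (rr n k) = 0 := by
  obtain ⟨ht0, ht1⟩ := theta_mem (n := n) hk1 hk2
  set θ := (k : ℝ) * Real.pi / (n + 2)
  have hc : 0 < Real.cos θ := Real.cos_pos_of_mem_Ioo ⟨by linarith [Real.pi_pos], ht1⟩
  have hs : 0 < Real.sin θ := Real.sin_pos_of_pos_of_lt_pi ht0 (by linarith [Real.pi_pos])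
  have := Q_eval θ hc.ne' n
  have harg : ((n:ℝ)+2) * θ = k * Real.pi := by
    show ((n:ℝ)+2) * ((k : ℝ) * Real.pi / (n + 2)) = k * Real.pi
    rw [mul_div_assoc']
    exact mul_div_cancel_left₀ _ (by positivity)
  rw [harg] at this
  have : Real.sin θ * (2 * Real.cos θ) ^ (n+1) * (Q n).eval (1 / (4 * Real.cos θ ^ 2)) = 0 := by
    rw [this]; exact Real.sin_nat_mul_pi k
  have hne : Real.sin θ * (2 * Real.cos θ) ^ (n+1) ≠ 0 := by positivity
  have := mul_eq_zero.mp this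
  rcases this with h | h
  · exact absurd h hne
  · exact h ▸ rfl

theorem rr_pos {n k : ℕ} (hk1 : 1 ≤ k) (hk2 : 2 * k ≤ n + 1) : 0 < rr n k := by
  obtain ⟨ht0, ht1⟩ := theta_mem (n := n) hk1 hk2
  have hc : 0 < Real.cos ((k : ℝ) * Real.pi / (n + 2)) :=
    Real.cos_pos_of_mem_Ioo ⟨by linarith [Real.pi_pos], ht1⟩
  unfold rr
  positivity

theorem rr_strictmono {n k k' : ℕ} (hk1 : 1 ≤ k) (hkk : k < k') (hk2 : 2 * k' ≤ n + 1) :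
    rr n k < rr n k' := by
  have hk'1 : 1 ≤ k' := by omega
  obtain ⟨ht0, ht1⟩ := theta_mem (n := n) hk1 (by omega)
  obtain ⟨ht0', ht1'⟩ := theta_mem (n := n) hk'1 hk2
  have hpi := Real.pi_pos
  have hlt : (k : ℝ) * Real.pi / (n + 2) < (k' : ℝ) * Real.pi / (n + 2) := by
    have h : (k:ℝ) < k' := by exact_mod_cast hkk
    have hn2 : (0:ℝ) < (n:ℝ) + 2 := by positivity
    have := Real.pi_pos
    rw [div_lt_div_iff₀ hn2 hn2]
    nlinarith [mul_lt_mul_of_pos_right (mul_lt_mul_of_pos_right h this) hn2]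
  have hc : 0 < Real.cos ((k : ℝ) * Real.pi / (n + 2)) :=
    Real.cos_pos_of_mem_Ioo ⟨by linarith, ht1⟩
  have hc' : 0 < Real.cos ((k' : ℝ) * Real.pi / (n + 2)) :=
    Real.cos_pos_of_mem_Ioo ⟨by linarith, ht1'⟩
  have hcos : Real.cos ((k' : ℝ) * Real.pi / (n + 2)) < Real.cos ((k : ℝ) * Real.pi / (n + 2)) := by
    apply Real.cos_lt_cos_of_nonneg_of_le_pi (le_of_lt ht0) (by linarith) hlt
  unfold rr
  have h1 : (0:ℝ) < 4 * Real.cos ((k' : ℝ) * Real.pi / (n + 2)) ^ 2 := by positivity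
  have h2 : (0:ℝ) < 4 * Real.cos ((k : ℝ) * Real.pi / (n + 2)) ^ 2 := by positivity
  rw [div_lt_div_iff₀ h2 h1]
  nlinarith
theorem Q_natDegree (n : ℕ) : (Q n).natDegree = (n+1)/2 ∧ (Q n).coeff ((n+1)/2) ≠ 0 := by
  rcases Nat.even_or_odd n with ⟨j, hj⟩ | ⟨j, hj⟩
  · have h := Q_deg j
    have : n = 2*j := by omega
    subst this
    have hm : (2*j+1)/2 = j := by omega
    rw [hm]
    refine ⟨h.1, ?_⟩
    rw [h.2.1]
    exact mul_ne_zero (pow_ne_zero _ (by norm_num)) (by positivity)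
  · have h := Q_deg j
    have : n = 2*j+1 := by omega
    subst this
    have hm : (2*j+1+1)/2 = j+1 := by omega
    rw [hm]
    refine ⟨h.2.2.1, ?_⟩
    rw [h.2.2.2]
    exact pow_ne_zero _ (by norm_num)

theorem Q_ne_zero (n : ℕ) : Q n ≠ 0 := fun h => (Q_natDegree n).2 (by rw [h]; simp)

theorem Q_roots_set (n : ℕ) (hn : 1 ≤ n) :
    {z : ℂ | aeval z (Q n) = 0} =
      (fun k : ℕ => ((rr n k : ℝ) : ℂ)) '' {k : ℕ | 1 ≤ k ∧ k ≤ (n + 1) / 2} := by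
  set m := (n+1)/2 with hm
  set P := (Q n).map (algebraMap ℝ ℂ) with hP
  have hPne : P ≠ 0 := by
    rw [hP, Polynomial.map_ne_zero_iff (algebraMap ℝ ℂ).injective]
    exact Q_ne_zero n
  have hPdeg : P.natDegree = m := by
    rw [hP, natDegree_map_eq_of_injective (algebraMap ℝ ℂ).injective, (Q_natDegree n).1]
  have hsplits : P.Splits := IsAlgClosed.splits _
  have hcard : P.roots.card = m := by
    rw [← hPdeg, ← Polynomial.splits_iff_card_roots.mp hsplits]
  -- the candidate finset of roots
  set T : Finset ℂ := (Finset.Icc 1 m).image (fun k => ((rr n k : ℝ) : ℂ)) with hT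
  have hinj : Set.InjOn (fun k : ℕ => ((rr n k : ℝ) : ℂ)) ↑(Finset.Icc 1 m) := by
    intro a ha b hb hab
    simp only [Finset.coe_Icc, Set.mem_Icc] at ha hb
    simp only [Complex.ofReal_inj] at hab
    by_contra hne
    rcases Nat.lt_or_ge a b with h | h
    · exact absurd hab (rr_strictmono ha.1 h (by omega)).ne
    · have h' : b < a := by omega
      exact absurd hab.symm (rr_strictmono hb.1 h' (by omega)).ne
  have hTcard : T.card = m := by
    rw [hT, Finset.card_image_of_injOn hinj, Nat.card_Icc]
    omega
  have hTsub : T ⊆ P.roots.toFinset := by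
    intro z hz
    rw [hT, Finset.mem_image] at hz
    obtain ⟨k, hk, rfl⟩ := hz
    rw [Finset.mem_Icc] at hk
    rw [Multiset.mem_toFinset, mem_roots hPne]
    show P.eval _ = 0
    rw [hP, eval_map, show ((rr n k : ℝ) : ℂ) = algebraMap ℝ ℂ (rr n k) from rfl,
      Polynomial.eval₂_hom, rr_root hk.1 (by omega)]
    simp
  have hTeq : T = P.roots.toFinset := by
    apply Finset.eq_of_subset_of_card_le hTsub
    calc P.roots.toFinset.card ≤ P.roots.card := Multiset.toFinset_card_le _
      _ = m := hcard
      _ = T.card := hTcard.symm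
  have hset : {z : ℂ | aeval z (Q n) = 0} = ↑P.roots.toFinset := by
    ext z
    simp only [Set.mem_setOf_eq, Finset.coe_sort_coe, Multiset.mem_toFinset, Finset.mem_coe,
      mem_roots hPne]
    show _ ↔ P.IsRoot z
    rw [hP, Polynomial.IsRoot.def, eval_map, ← Polynomial.aeval_def]
  rw [hset, ← hTeq, hT, Finset.coe_image, Finset.coe_Icc]
  have hIcc : Set.Icc 1 m = {k : ℕ | 1 ≤ k ∧ k ≤ m} := by
    ext k; simp
  rw [hIcc]

open scoped Classical in
theorem indPolyOn_eq_sum {V : Type*} [Fintype V] (G : SimpleGraph V) (A : Set V)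
    (T : Finset (Finset V))
    (hT : ∀ s : Finset V, s ∈ T ↔ (↑s ⊆ A ∧ ∀ u ∈ s, ∀ v ∈ s, ¬ G.Adj u v)) :
    indPolyOn G A = ∑ s ∈ T, ((-1 : ℝ) ^ s.card) • (X : Polynomial ℝ) ^ s.card := by
  unfold indPolyOn
  apply Finset.sum_congr _ (fun _ _ => rfl)
  ext s
  rw [Finset.mem_filter, hT]
  simp

theorem f_zero (n : ℕ) : indPolyOn (SimpleGraph.pathGraph n) {v : Fin n | v.val < 0} = 1 := by
  classical
  rw [indPolyOn_eq_sum _ _ {∅} ?_]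
  · simp
  · intro s
    simp only [Finset.mem_singleton]
    constructor
    · rintro rfl
      simp
    · rintro ⟨hsub, -⟩
      ext v
      simp only [Finset.notMem_empty, iff_false]
      intro hv
      exact absurd (hsub hv) (by simp)

theorem f_one (n : ℕ) (hn : 1 ≤ n) :
    indPolyOn (SimpleGraph.pathGraph n) {v : Fin n | v.val < 1} = 1 - X := by
  classical
  set v0 : Fin n := ⟨0, by omega⟩ with hv0
  rw [indPolyOn_eq_sum _ _ {∅, {v0}} ?_]
  · rw [Finset.sum_pair (by
      intro hcontra
      exact absurd (hcontra ▸ Finset.mem_singleton_self v0) (Finset.notMem_empty v0))]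
    simp
    ring
  · intro s
    simp only [Finset.mem_insert, Finset.mem_singleton]
    rw [Iff.comm]
    constructor
    · rintro ⟨hsub, -⟩
      exact Finset.subset_singleton_iff.mp (fun v hv => by
        have hlt := hsub hv
        simp only [Set.mem_setOf_eq] at hlt
        simp only [Finset.mem_singleton]
        have h0 : (v0:ℕ) = 0 := rfl
        exact Fin.ext (by omega : (v : ℕ) = (v0 : ℕ)))
    · rintro (rfl | rfl)
      · simp
      · refine ⟨by intro v hv; simp only [Finset.coe_singleton, Set.mem_singleton_iff] at hv; simp [hv, hv0], ?_⟩
        intro u hu v hv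
        simp only [Finset.mem_singleton] at hu hv
        subst hu; subst hv
        simp

theorem f_rec (n m : ℕ) (h : m + 2 ≤ n) :
    indPolyOn (SimpleGraph.pathGraph n) {v : Fin n | v.val < m + 2}
      = indPolyOn (SimpleGraph.pathGraph n) {v : Fin n | v.val < m + 1}
        - X * indPolyOn (SimpleGraph.pathGraph n) {v : Fin n | v.val < m} := by
  classical
  set G := SimpleGraph.pathGraph n with hG
  set a : Fin n := ⟨m+1, by omega⟩ with ha
  have ha0 : (a : ℕ) = m + 1 := rfl
  set g : Finset (Fin n) → Polynomial ℝ :=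
    fun s => ((-1 : ℝ) ^ s.card) • (X : Polynomial ℝ) ^ s.card with hg
  set F : Set (Fin n) → Finset (Finset (Fin n)) :=
    fun A => Finset.univ.filter (fun s => ↑s ⊆ A ∧ ∀ u ∈ s, ∀ v ∈ s, ¬ G.Adj u v) with hF
  have hmemF : ∀ (A : Set (Fin n)) (s : Finset (Fin n)),
      s ∈ F A ↔ (↑s ⊆ A ∧ ∀ u ∈ s, ∀ v ∈ s, ¬ G.Adj u v) := by
    intro A s
    rw [hF]
    simp
  have e2 : indPolyOn G {v : Fin n | v.val < m + 2} = ∑ s ∈ F {v : Fin n | v.val < m + 2}, g s :=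
    indPolyOn_eq_sum _ _ _ (hmemF _)
  have e1 : indPolyOn G {v : Fin n | v.val < m + 1} = ∑ s ∈ F {v : Fin n | v.val < m + 1}, g s :=
    indPolyOn_eq_sum _ _ _ (hmemF _)
  have e0 : indPolyOn G {v : Fin n | v.val < m} = ∑ s ∈ F {v : Fin n | v.val < m}, g s :=
    indPolyOn_eq_sum _ _ _ (hmemF _)
  rw [e2, e1, e0]
  -- split the sum according to whether `a ∈ s`
  rw [← Finset.sum_filter_add_sum_filter_not (F {v : Fin n | v.val < m + 2}) (fun s => a ∈ s) g]
  have hnot : (F {v : Fin n | v.val < m + 2}).filter (fun s => ¬ a ∈ s)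
      = F {v : Fin n | v.val < m + 1} := by
    ext s
    rw [Finset.mem_filter, hmemF, hmemF]
    constructor
    · rintro ⟨⟨hsub, hind⟩, hna⟩
      refine ⟨?_, hind⟩
      intro v hv
      have h2 := hsub hv
      simp only [Set.mem_setOf_eq] at h2 ⊢
      have : v ≠ a := fun hva => hna (hva ▸ hv)
      have : (v : ℕ) ≠ m + 1 := fun hval => this (Fin.ext (hval.trans ha0.symm))
      omega
    · rintro ⟨hsub, hind⟩
      refine ⟨⟨?_, hind⟩, ?_⟩
      · intro v hv
        have h2 := hsub hv
        simp only [Set.mem_setOf_eq] at h2 ⊢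
        omega
      · intro hmem
        have h2 := hsub hmem
        simp only [Set.mem_setOf_eq, ha0] at h2
        omega
  have hyes : ∑ s ∈ (F {v : Fin n | v.val < m + 2}).filter (fun s => a ∈ s), g s
      = ∑ s ∈ F {v : Fin n | v.val < m}, (-(X * g s)) := by
    refine Finset.sum_nbij' (fun s => s.erase a) (fun s => insert a s) ?_ ?_ ?_ ?_ ?_
    · -- maps into
      intro s hs
      rw [Finset.mem_filter, hmemF] at hs
      obtain ⟨⟨hsub, hind⟩, hmem⟩ := hs
      rw [hmemF]
      constructor
      · intro v hv
        rw [Finset.coe_erase, Set.mem_diff] at hv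
        obtain ⟨hv, hvne⟩ := hv
        have h2 := hsub hv
        simp only [Set.mem_setOf_eq] at h2 ⊢
        have hne1 : (v : ℕ) ≠ m + 1 := by
          intro hval
          exact hvne (by simpa using Fin.ext (hval.trans ha0.symm))
        have hnem : (v : ℕ) ≠ m := by
          intro hval
          have : G.Adj v a := by
            rw [hG, SimpleGraph.pathGraph_adj]
            left
            rw [ha0, hval]
          exact hind v hv a hmem this
        omega
      · intro u hu v hv
        exact hind u (Finset.mem_of_mem_erase hu) v (Finset.mem_of_mem_erase hv)
    · -- maps back
      intro s hs
      rw [hmemF] at hs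
      obtain ⟨hsub, hind⟩ := hs
      have hna : a ∉ s := by
        intro hmem
        have := hsub hmem
        simp only [Set.mem_setOf_eq, ha0] at this
        omega
      rw [Finset.mem_filter, hmemF]
      refine ⟨⟨?_, ?_⟩, Finset.mem_insert_self a s⟩
      · intro v hv
        rw [Finset.coe_insert, Set.mem_insert_iff] at hv
        rcases hv with rfl | hv
        · simp only [Set.mem_setOf_eq, ha0]; omega
        · have := hsub hv
          simp only [Set.mem_setOf_eq] at this ⊢
          omega
      · intro u hu v hv
        rw [Finset.mem_insert] at hu hv
        have key : ∀ w ∈ s, ¬ G.Adj a w := by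
          intro w hw hadj
          rw [hG, SimpleGraph.pathGraph_adj] at hadj
          have hwlt := hsub hw
          simp only [Set.mem_setOf_eq] at hwlt
          rw [ha0] at hadj
          omega
        rcases hu with rfl | hu <;> rcases hv with rfl | hv
        · exact fun hadj => G.irrefl hadj
        · exact key v hv
        · exact fun hadj => key u hu hadj.symm
        · exact hind u hu v hv
    · -- left inverse
      intro s hs
      rw [Finset.mem_filter] at hs
      exact Finset.insert_erase hs.2
    · -- right inverse
      intro s hs
      rw [hmemF] at hs
      apply Finset.erase_insert
      intro hmem
      have := hs.1 hmem
      simp only [Set.mem_setOf_eq, ha0] at this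
      omega
    · -- values agree
      intro s hs
      rw [Finset.mem_filter] at hs
      have hcard : (s.erase a).card + 1 = s.card := by
        rw [Finset.card_erase_of_mem hs.2]
        have : 1 ≤ s.card := Finset.card_pos.mpr ⟨a, hs.2⟩
        omega
      rw [hg]
      simp only
      rw [← hcard]
      rw [pow_succ, pow_succ]
      rw [smul_eq_C_mul, smul_eq_C_mul, map_mul]
      simp only [map_neg, map_one]
      ring
  rw [hnot, hyes]
  rw [Finset.sum_neg_distrib, ← Finset.mul_sum]
  ring

theorem f_eq_Q (n : ℕ) : ∀ m, m ≤ n →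
    indPolyOn (SimpleGraph.pathGraph n) {v : Fin n | v.val < m} = Q m := by
  intro m
  induction m using Nat.strong_induction_on with
  | _ m ih =>
    match m with
    | 0 => intro _; exact f_zero n
    | 1 => intro h1; exact f_one n h1
    | (m+2) =>
      intro hm
      rw [f_rec n m hm, ih (m+1) (by omega) (by omega), ih m (by omega) (by omega)]
      rfl

theorem indPoly_eq_Q (n : ℕ) : indPoly (SimpleGraph.pathGraph n) = Q n := by
  rw [indPoly, show (Set.univ : Set (Fin n)) = {v : Fin n | v.val < n} by
    ext v; simp [v.isLt]]
  exact f_eq_Q n n le_rfl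
/-- For `n ≥ 1`, the set of complex roots of the independence
polynomial of the path graph `P_n` is exactly
`{1/(4cos²(kπ/(n+2))) : 1 ≤ k ≤ ⌈n/2⌉}`.  In particular the smallest root is
`β(P_n) = 1/(4cos²(π/(n+2)))`, and for `n ≥ 3` the root of second smallest absolute
value is `1/(4cos²(2π/(n+2)))`. -/
theorem indPoly_pathGraph_roots (n : ℕ) (hn : 1 ≤ n) :
    ({z : ℂ | aeval z (indPoly (SimpleGraph.pathGraph n)) = 0} =
      (fun k : ℕ =>
          ((1 / (4 * Real.cos (k * Real.pi / (n + 2)) ^ 2) : ℝ) : ℂ)) ''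
        {k : ℕ | 1 ≤ k ∧ k ≤ (n + 1) / 2}) ∧
    ((indPoly (SimpleGraph.pathGraph n)).eval
        (1 / (4 * Real.cos (Real.pi / (n + 2)) ^ 2)) = 0 ∧
      ∀ x : ℝ, (indPoly (SimpleGraph.pathGraph n)).eval x = 0 →
        1 / (4 * Real.cos (Real.pi / (n + 2)) ^ 2) ≤ x) ∧
    (3 ≤ n →
      (indPoly (SimpleGraph.pathGraph n)).eval
          (1 / (4 * Real.cos (2 * Real.pi / (n + 2)) ^ 2)) = 0 ∧
      ∀ z : ℂ, aeval z (indPoly (SimpleGraph.pathGraph n)) = 0 →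
        z ≠ ((1 / (4 * Real.cos (Real.pi / (n + 2)) ^ 2) : ℝ) : ℂ) →
        1 / (4 * Real.cos (2 * Real.pi / (n + 2)) ^ 2) ≤ ‖z‖) := by

  have hQ := indPoly_eq_Q n
  have hm1 : 1 ≤ (n+1)/2 := by omega
  have h1 : rr n 1 = 1 / (4 * Real.cos (Real.pi / (n + 2)) ^ 2) := by
    unfold rr; norm_num
  have h2 : rr n 2 = 1 / (4 * Real.cos (2 * Real.pi / (n + 2)) ^ 2) := by
    unfold rr; norm_num
  have hroots : {z : ℂ | aeval z (Q n) = 0} =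
      (fun k : ℕ => ((rr n k : ℝ) : ℂ)) '' {k : ℕ | 1 ≤ k ∧ k ≤ (n + 1) / 2} :=
    Q_roots_set n hn
  have hmem : ∀ z : ℂ, aeval z (Q n) = 0 →
      ∃ k : ℕ, (1 ≤ k ∧ k ≤ (n+1)/2) ∧ ((rr n k : ℝ) : ℂ) = z := by
    intro z hz
    have : z ∈ {z : ℂ | aeval z (Q n) = 0} := hz
    rw [hroots] at this
    obtain ⟨k, hk, hkz⟩ := this
    exact ⟨k, hk, hkz⟩
  refine ⟨?_, ⟨?_, ?_⟩, ?_⟩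
  · rw [hQ, hroots]
    rfl
  · rw [hQ, ← h1]
    exact rr_root le_rfl (by omega)
  · intro x hx
    rw [hQ] at hx
    have hx' : aeval (x : ℂ) (Q n) = 0 := by
      rw [aeval_def, show ((x:ℝ):ℂ) = algebraMap ℝ ℂ x from rfl, Polynomial.eval₂_hom, hx]
      simp
    obtain ⟨k, ⟨hk1, hk2⟩, hkx⟩ := hmem _ hx'
    have hxk : x = rr n k := by
      exact_mod_cast hkx.symm
    rw [← h1, hxk]
    rcases Nat.eq_or_lt_of_le hk1 with h | h
    · rw [← h]
    · exact le_of_lt (rr_strictmono le_rfl h (by omega))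
  · intro h3
    constructor
    · rw [hQ, ← h2]
      exact rr_root (by omega) (by omega)
    · intro z hz hne
      rw [hQ] at hz
      obtain ⟨k, ⟨hk1, hk2⟩, hkz⟩ := hmem _ hz
      have hk2' : 2 ≤ k := by
        rcases Nat.eq_or_lt_of_le hk1 with h | h
        · exfalso
          apply hne
          rw [← hkz, ← h, h1]
        · omega
      have hle : rr n 2 ≤ rr n k := by
        rcases Nat.eq_or_lt_of_le hk2' with h | h
        · rw [h]
        · exact le_of_lt (rr_strictmono (by omega) h (by omega))
      rw [← hkz, Complex.norm_of_nonneg (rr_pos hk1 (by omega)).le, ← h2]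
      exact hle
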